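/- arXiv:1808.04846 — 7 statements merged into one kernel-verified Lean document; each statement's English description precedes it below -/
import Mathlib

section
/- Let A be the 4×4 matrix with rows (-b/K, -α₁, -α₂, -α₃), (α₁, 0, 0, -η₁), (α₂, 0, 0, -η₂), (α₃, η₁, η₂, 0), where b, K, α₁, α₂, α₃, η₁, η₂ are real numbers. Then det A = (η₁α₂ - η₂α₁)². -/
theorem det_coinfection_matrix (b K α₁ α₂ α₃ η₁ η₂ : ℝ) :
    Matrix.det !![-b/K, -α₁, -α₂, -α₃;
                  α₁, 0, 0, -η₁;
                  α₂, 0, 0, -η₂;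
                  α₃, η₁, η₂, 0] = (η₁ * α₂ - η₂ * α₁) ^ 2 := by
  simp [Matrix.det_succ_row_zero, Fin.sum_univ_succ, Fin.succAbove, Fin.castSucc, Fin.castAdd, Fin.castLE]
  ring
end

section
/- Let M ∈ ℝⁿˣⁿ be positive semi-definite in the sense of quadratic forms (xᵀMx ≥ 0 for all x) and q ∈ ℝⁿ. Then the solution set of the linear complementarity problem LCP(M,q), i.e. {z ∈ ℝⁿ : z ≥ 0, q + Mz ≥ 0, zᵀ(q + Mz) = 0}, is convex. -/
open Matrix in
theorem lcp_solution_set_convex (n : ℕ) (M : Matrix (Fin n) (Fin n) ℝ) (q : Fin n → ℝ)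
    (hM : ∀ x : Fin n → ℝ, 0 ≤ x ⬝ᵥ M.mulVec x) :
    Convex ℝ {z : Fin n → ℝ |
      (∀ i, 0 ≤ z i) ∧ (∀ i, 0 ≤ q i + M.mulVec z i) ∧
      z ⬝ᵥ (q + M.mulVec z) = 0} := by
  rintro x ⟨hx1, hx2, hx3⟩ y ⟨hy1, hy2, hy3⟩ a b ha hb hab
  -- cross terms are nonnegative
  have hcx : 0 ≤ x ⬝ᵥ (q + M.mulVec y) :=
    Finset.sum_nonneg fun i _ => mul_nonneg (hx1 i) (hy2 i)
  have hcy : 0 ≤ y ⬝ᵥ (q + M.mulVec x) :=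
    Finset.sum_nonneg fun i _ => mul_nonneg (hy1 i) (hx2 i)
  -- PSD gives sum of cross terms ≤ 0
  have hpsd := hM (x - y)
  have expand : (x - y) ⬝ᵥ M.mulVec (x - y) =
      x ⬝ᵥ M.mulVec x - x ⬝ᵥ M.mulVec y - y ⬝ᵥ M.mulVec x + y ⬝ᵥ M.mulVec y := by
    simp [Matrix.mulVec_sub, dotProduct_sub, sub_dotProduct]
    ring
  have hx3' : x ⬝ᵥ q + x ⬝ᵥ M.mulVec x = 0 := by
    rw [← dotProduct_add]; exact hx3
  have hy3' : y ⬝ᵥ q + y ⬝ᵥ M.mulVec y = 0 := by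
    rw [← dotProduct_add]; exact hy3
  have hsum : x ⬝ᵥ (q + M.mulVec y) + y ⬝ᵥ (q + M.mulVec x) ≤ 0 := by
    have : x ⬝ᵥ (q + M.mulVec y) + y ⬝ᵥ (q + M.mulVec x)
        = -((x - y) ⬝ᵥ M.mulVec (x - y)) := by
      rw [expand, dotProduct_add, dotProduct_add]
      linarith
    linarith
  have hcx0 : x ⬝ᵥ (q + M.mulVec y) = 0 := by linarith
  have hcy0 : y ⬝ᵥ (q + M.mulVec x) = 0 := by linarith
  refine ⟨fun i => add_nonneg (mul_nonneg ha (hx1 i)) (mul_nonneg hb (hy1 i)),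
    fun i => ?_, ?_⟩
  · have : q i + M.mulVec (a • x + b • y) i
        = a * (q i + M.mulVec x i) + b * (q i + M.mulVec y i) := by
      simp [Matrix.mulVec_add, Matrix.mulVec_smul]
      have : a * q i + b * q i = q i := by rw [← add_mul, hab, one_mul]
      ring_nf
      nlinarith [this]
    rw [this]
    exact add_nonneg (mul_nonneg ha (hx2 i)) (mul_nonneg hb (hy2 i))
  · have hq : q + M.mulVec (a • x + b • y)
        = a • (q + M.mulVec x) + b • (q + M.mulVec y) := by
      funext i
      simp [Matrix.mulVec_add, Matrix.mulVec_smul]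
      have : a * q i + b * q i = q i := by rw [← add_mul, hab, one_mul]
      ring_nf
      nlinarith [this]
    rw [hq, add_dotProduct, smul_dotProduct, smul_dotProduct,
      dotProduct_add, dotProduct_add, dotProduct_smul, dotProduct_smul,
      dotProduct_smul, dotProduct_smul]
    simp only [smul_eq_mul]
    rw [hx3, hy3, hcx0, hcy0]
    ring
end

section
/- Assume b, K, μᵢ, αᵢ, ηᵢ > 0 with σ₁ < σ₂ where σᵢ = μᵢ/αᵢ. If Δ := η₁α₂ - η₂α₁ = 0, then the linear system AY = q (where A and q are as in the coinfection model) has no solution; equivalently, the interior equilibrium set is empty. -/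
theorem no_interior_equilibrium_when_delta_zero
    (b K μ₀ μ₁ μ₂ μ₃ α₁ α₂ α₃ η₁ η₂ : ℝ)
    (hb : 0 < b) (hK : 0 < K) (hμ₀ : 0 < μ₀) (hμ₁ : 0 < μ₁) (hμ₂ : 0 < μ₂) (hμ₃ : 0 < μ₃)
    (hα₁ : 0 < α₁) (hα₂ : 0 < α₂) (hα₃ : 0 < α₃) (hη₁ : 0 < η₁) (hη₂ : 0 < η₂)
    (hσ : μ₁ / α₁ < μ₂ / α₂)
    (hΔ : η₁ * α₂ - η₂ * α₁ = 0) :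
    ¬ ∃ Y₀ Y₁ Y₂ Y₃ : ℝ,
      -(b / K) * Y₀ - α₁ * Y₁ - α₂ * Y₂ - α₃ * Y₃ = -b + μ₀ ∧
      α₁ * Y₀ - η₁ * Y₃ = μ₁ ∧
      α₂ * Y₀ - η₂ * Y₃ = μ₂ ∧
      α₃ * Y₀ + η₁ * Y₁ + η₂ * Y₂ = μ₃ := by
  rintro ⟨Y₀, Y₁, Y₂, Y₃, _, h2, h3, _⟩
  have key : μ₁ * α₂ - μ₂ * α₁ = 0 := by linear_combination α₁ * h3 - α₂ * h2 - Y₃ * hΔ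
  have hlt : μ₁ * α₂ < μ₂ * α₁ := by
    have := (div_lt_div_iff₀ hα₁ hα₂).mp hσ
    linarith
  linarith
end

section
/- Let h : [0,∞) → ℝ be twice continuously differentiable with h ∈ L^q([0,∞)) for some q ≥ 1 and with h' and h'' bounded on [0,∞). Then h ∈ L^{2q} would follow and moreover lim_{t→∞} h(t) = 0 and lim_{t→∞} h'(t) = 0. -/
open MeasureTheory Filter Set Real
section Aux

lemma contAbsRpow {c : ℝ} (hc : 0 ≤ c) : Continuous (fun x : ℝ => |x| ^ c) := by
  rcases eq_or_lt_of_le hc with h | h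
  · simp [← h]; exact continuous_const
  · refine continuous_iff_continuousAt.2 fun x => ?_
    exact (Real.continuousAt_rpow_const _ _ (Or.inr hc)).comp continuous_abs.continuousAt

lemma phi_deriv {q : ℝ} (hq : 1 ≤ q) (x : ℝ) :
    HasDerivAt (fun x : ℝ => x * |x| ^ (2*q - 2)) ((2*q - 1) * |x| ^ (2*q - 2)) x := by
  rcases eq_or_lt_of_le hq with h | h
  · subst h
    norm_num [Real.rpow_zero]
    exact hasDerivAt_id x
  · have hc : 0 < 2*q - 2 := by linarith
    rcases lt_trichotomy x 0 with hx | hx | hx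
    · have heq : (fun y : ℝ => -((-y) ^ (2*q - 2 + 1))) =ᶠ[nhds x] fun y => y * |y| ^ (2*q - 2) := by
        filter_upwards [eventually_lt_nhds hx] with y hy
        rw [abs_of_neg hy, Real.rpow_add_one (by linarith : -y ≠ 0)]
        ring
      have h1 : HasDerivAt (fun y : ℝ => (-y) ^ (2*q - 2 + 1))
          (((2*q - 2 + 1) * (-x) ^ (2*q - 2 + 1 - 1)) * (-1)) x :=
        (Real.hasDerivAt_rpow_const (p := 2*q-2+1) (Or.inl (by linarith))).comp x
          (hasDerivAt_neg x)
      have hd := h1.neg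
      refine (HasDerivAt.congr_of_eventuallyEq ?_ heq.symm)
      refine hd.congr_deriv ?_
      rw [abs_of_neg hx]
      ring_nf
    · subst hx
      have h0 : (2*q - 1) * |(0:ℝ)| ^ (2*q - 2) = 0 := by
        rw [abs_zero, Real.zero_rpow (ne_of_gt hc), mul_zero]
      rw [h0, hasDerivAt_iff_tendsto_slope]
      have hs : ∀ y ∈ ({(0:ℝ)}ᶜ : Set ℝ),
          |y| ^ (2*q-2) = slope (fun x : ℝ => x * |x| ^ (2*q - 2)) 0 y := by
        intro y hy
        have hy' : y ≠ 0 := hy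
        simp only [slope, vsub_eq_sub, sub_zero, mul_zero, zero_mul, smul_eq_mul]
        field_simp
      have hcont : Tendsto (fun y : ℝ => |y| ^ (2*q-2)) (nhds 0) (nhds 0) := by
        have h2 := (contAbsRpow (le_of_lt hc)).tendsto (0:ℝ)
        simpa [Real.zero_rpow (ne_of_gt hc)] using h2
      exact (hcont.mono_left nhdsWithin_le_nhds).congr'
        (Filter.eventuallyEq_of_mem self_mem_nhdsWithin hs)
    · have heq : (fun y : ℝ => y ^ (2*q - 2 + 1)) =ᶠ[nhds x] fun y => y * |y| ^ (2*q - 2) := by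
        filter_upwards [eventually_gt_nhds hx] with y hy
        rw [abs_of_pos hy, Real.rpow_add_one (ne_of_gt hy)]
        ring
      have hd : HasDerivAt (fun y : ℝ => y ^ (2*q - 2 + 1))
          ((2*q - 2 + 1) * x ^ (2*q - 2 + 1 - 1)) x :=
        Real.hasDerivAt_rpow_const (Or.inl (ne_of_gt hx))
      refine HasDerivAt.congr_of_eventuallyEq ?_ heq.symm
      refine hd.congr_deriv ?_
      rw [abs_of_pos hx]
      ring_nf

lemma mul_phi {q : ℝ} (hq : 1 ≤ q) (x : ℝ) :
    x * (x * |x| ^ (2*q-2)) = |x| ^ (2*q) := by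
  have h2 : |x| ^ (2:ℝ) = x * x := by
    rw [show (2:ℝ) = ((2:ℕ):ℝ) by norm_num, Real.rpow_natCast, sq_abs, sq]
  rw [show (2*q) = 2 + (2*q - 2) by ring,
    Real.rpow_add' (abs_nonneg x) (ne_of_gt (by linarith : (0:ℝ) < 2 + (2*q-2))), h2]
  ring

lemma phi_abs_le {q x M : ℝ} (hq : 1 ≤ q) (hx : |x| ≤ M) :
    |x * |x| ^ (2*q-2)| ≤ M ^ (2*q-1) := by
  have h1 : |x * |x| ^ (2*q-2)| = |x| ^ (2*q-1) := by
    rw [abs_mul, abs_of_nonneg (Real.rpow_nonneg (abs_nonneg x) _),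
      show (2*q-1) = 1 + (2*q-2) by ring,
      Real.rpow_add' (abs_nonneg x) (ne_of_gt (by linarith : (0:ℝ) < 1 + (2*q-2))),
      Real.rpow_one]
  rw [h1]
  exact Real.rpow_le_rpow (abs_nonneg x) hx (by linarith)

lemma young_free {q D a b : ℝ} (hq : 1 ≤ q) (hD : 0 ≤ D) (ha : 0 ≤ a) (hb : 0 ≤ b) :
    D * (a * b ^ (2*q - 2)) ≤ 2^(q-1) * D^q * a^q + (1/2) * b^(2*q) := by
  rcases le_or_gt (D * (a * b ^ (2*q-2))) ((1/2) * b^(2*q)) with hcase | hcase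
  · have hpos : (0:ℝ) ≤ 2^(q-1) * D^q * a^q := by positivity
    linarith
  · have hb2 : b^(2:ℝ) ≤ 2*(D*a) := by
      rcases eq_or_lt_of_le hb with h0 | h0
      · rw [← h0, Real.zero_rpow (by norm_num)]
        positivity
      · have hsplit : b^(2*q) = b^(2:ℝ) * b^(2*q-2) := by
          rw [← Real.rpow_add h0]
          ring_nf
        have hbp : 0 < b^(2*q-2) := Real.rpow_pos_of_pos h0 _
        have h4 : (1/2) * b^(2:ℝ) * b^(2*q-2) < D * a * b^(2*q-2) := by
          calc (1/2) * b^(2:ℝ) * b^(2*q-2) = (1/2)*b^(2*q) := by rw [hsplit]; ring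
            _ < D * (a * b^(2*q-2)) := hcase
            _ = D * a * b^(2*q-2) := by ring
        have h5 : (1/2) * b^(2:ℝ) ≤ D * a := le_of_lt (lt_of_mul_lt_mul_right h4 (le_of_lt hbp))
        linarith
    have h3 : b^(2*q-2) ≤ (2*(D*a))^(q-1) := by
      calc b^(2*q-2) = (b^(2:ℝ))^(q-1) := by
            rw [← Real.rpow_mul hb]
            ring_nf
        _ ≤ (2*(D*a))^(q-1) :=
            Real.rpow_le_rpow (Real.rpow_nonneg hb _) hb2 (by linarith)
    have hexp : (2*(D*a))^(q-1) = 2^(q-1) * D^(q-1) * a^(q-1) := by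
      rw [Real.mul_rpow (by norm_num) (by positivity), Real.mul_rpow hD ha]
      ring
    have hDq : D * D^(q-1) = D^q := by
      rw [show q = 1 + (q-1) by ring, Real.rpow_add' hD (by intro hc; simp at hc; linarith),
        Real.rpow_one]
      ring_nf
    have haq : a * a^(q-1) = a^q := by
      rw [show q = 1 + (q-1) by ring, Real.rpow_add' ha (by intro hc; simp at hc; linarith),
        Real.rpow_one]
      ring_nf
    calc D * (a * b^(2*q-2)) ≤ D * (a * (2^(q-1) * D^(q-1) * a^(q-1))) := by
          rw [← hexp]
          exact mul_le_mul_of_nonneg_left (mul_le_mul_of_nonneg_left h3 ha) hD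
      _ = 2^(q-1) * (D * D^(q-1)) * (a * a^(q-1)) := by ring
      _ = 2^(q-1) * D^q * a^q := by rw [hDq, haq]
      _ ≤ 2^(q-1) * D^q * a^q + (1/2) * b^(2*q) := by
          have : (0:ℝ) ≤ (1/2) * b^(2*q) := by positivity
          linarith

lemma tendsto_zero_of_Lq (h : ℝ → ℝ) (q M : ℝ) (hq : 1 ≤ q) (hM : 1 ≤ M)
    (hlip : ∀ s ∈ Ici (0:ℝ), ∀ t ∈ Ici (0:ℝ), |h s - h t| ≤ M * |s - t|)
    (hLq : IntegrableOn (fun t => |h t| ^ q) (Ici (0:ℝ))) :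
    Tendsto h atTop (nhds 0) := by
  by_contra hcon
  rw [Metric.tendsto_atTop] at hcon
  push_neg at hcon
  obtain ⟨ε, hε, hcon⟩ := hcon
  set δ : ℝ := ε / (2 * M) with hδdef
  have hδ : 0 < δ := by positivity
  have hMδ : M * δ = ε / 2 := by
    field_simp [hδdef]
    rw [hδdef]; field_simp [show M ≠ 0 by linarith]
  -- tail integral small
  have hint1 : IntegrableOn (fun t => |h t| ^ q) (Ioi (0:ℝ)) :=
    hLq.mono_set Ioi_subset_Ici_self
  set I : ℝ := ∫ t in Ioi (0:ℝ), |h t| ^ q with hIdef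
  have htend : Tendsto (fun b : ℝ => ∫ t in (0:ℝ)..b, |h t| ^ q) atTop (nhds I) :=
    intervalIntegral_tendsto_integral_Ioi 0 hint1 tendsto_id
  have hc : 0 < δ * (ε/2) ^ q := by positivity
  obtain ⟨A, hA⟩ := (Metric.tendsto_atTop.mp htend) (δ * (ε/2)^q) hc
  set A' : ℝ := max A 0 with hA'def
  have hA'0 : (0:ℝ) ≤ A' := le_max_right _ _
  have htail : ∫ t in Ioi A', |h t| ^ q < δ * (ε/2)^q := by
    have h1 := hA A' (le_max_left _ _)
    have hsplit : I = (∫ t in Ioc 0 A', |h t| ^ q) + ∫ t in Ioi A', |h t| ^ q := by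
      rw [hIdef, ← setIntegral_union
        (Set.Ioc_disjoint_Ioi le_rfl) measurableSet_Ioi
        (hLq.mono_set (fun x hx => le_of_lt hx.1 : Ioc (0:ℝ) A' ⊆ Ici 0))
        (hLq.mono_set (fun x hx => le_trans hA'0 (le_of_lt hx) : Ioi A' ⊆ Ici 0)),
        Set.Ioc_union_Ioi_eq_Ioi hA'0]
    rw [intervalIntegral.integral_of_le hA'0, Real.dist_eq] at h1
    have := abs_lt.mp h1
    linarith [hsplit, this.1]
  obtain ⟨t, ht, hht⟩ := hcon A'
  have ht0 : (0:ℝ) ≤ t := le_trans hA'0 ht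
  rw [Real.dist_eq, sub_zero] at hht
  -- lower bound on Ioc t (t+δ)
  have hIoc_sub : Ioc t (t + δ) ⊆ Ici (0:ℝ) := fun s hs => le_trans ht0 (le_of_lt hs.1)
  have hlower : ∀ s ∈ Ioc t (t + δ), (ε/2) ^ q ≤ |h s| ^ q := by
    intro s hs
    refine Real.rpow_le_rpow (by positivity) ?_ (by linarith)
    have h1 := hlip s (hIoc_sub hs) t ht0
    have h2 : |s - t| ≤ δ := by
      rw [abs_of_nonneg (by linarith [hs.1.le] : (0:ℝ) ≤ s - t)]
      linarith [hs.2]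
    have h3 : |h s - h t| ≤ M * δ := le_trans h1 (by nlinarith)
    have := abs_sub_abs_le_abs_sub (h t) (h s)
    rw [abs_sub_comm (h t) (h s)] at this
    linarith [hMδ ▸ h3]
  have hint2 : IntegrableOn (fun t => |h t| ^ q) (Ioc t (t+δ)) := hLq.mono_set hIoc_sub
  have hstep1 : δ * (ε/2)^q ≤ ∫ s in Ioc t (t+δ), |h s| ^ q := by
    have hconst : ∫ _ in Ioc t (t+δ), (ε/2)^q = δ * (ε/2)^q := by
      simp [Real.volume_Ioc, ENNReal.toReal_ofReal (le_of_lt hδ), le_of_lt hδ]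
    rw [← hconst]
    exact setIntegral_mono_on (integrableOn_const (by simp))
      hint2 measurableSet_Ioc hlower
  have hstep2 : ∫ s in Ioc t (t+δ), |h s| ^ q ≤ ∫ s in Ioi A', |h s| ^ q := by
    refine setIntegral_mono_set (hLq.mono_set (fun x hx => le_trans hA'0 (le_of_lt hx)))
      (Filter.Eventually.of_forall fun s => by positivity) ?_
    exact Filter.Eventually.of_forall (fun s hs => lt_of_le_of_lt ht hs.1)
  linarith

lemma deriv_tendsto_zero (h h' h'' : ℝ → ℝ) (M₂ : ℝ)
    (hd1 : ∀ t ∈ Ici (0:ℝ), HasDerivAt h (h' t) t)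
    (hd2 : ∀ t ∈ Ici (0:ℝ), HasDerivAt h' (h'' t) t)
    (hM₂ : ∀ t ∈ Ici (0:ℝ), |h'' t| ≤ M₂)
    (hh : Tendsto h atTop (nhds 0)) :
    Tendsto h' atTop (nhds 0) := by
  have hM₂0 : 0 ≤ M₂ := le_trans (abs_nonneg _) (hM₂ 0 (by simp))
  rw [Metric.tendsto_atTop]
  intro ε hε
  set M : ℝ := max M₂ 1 with hMdef
  have hM1 : 1 ≤ M := le_max_right _ _
  set δ : ℝ := ε / (2 * M) with hδdef
  have hδ : 0 < δ := by positivity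
  have hM₂δ : M₂ * δ ≤ ε / 2 := by
    have : M₂ * δ ≤ M * δ := mul_le_mul_of_nonneg_right (le_max_left _ _) hδ.le
    have hMδ : M * δ = ε / 2 := by field_simp [hδdef]; rw [hδdef]; field_simp [show M ≠ 0 by linarith]
    linarith
  obtain ⟨N, hN⟩ := Metric.tendsto_atTop.mp hh (ε * δ / 8) (by positivity)
  refine ⟨max N 0, fun t ht => ?_⟩
  have ht0 : (0:ℝ) ≤ t := le_trans (le_max_right _ _) ht
  have htN : N ≤ t := le_trans (le_max_left _ _) ht
  -- MVT bound for h'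
  have hmvt : ∀ s ∈ Icc t (t + δ), ‖h' s - h' t‖ ≤ M₂ * δ := by
    intro s hs
    have hs0 : s ∈ Ici (0:ℝ) := le_trans ht0 hs.1
    have := (convex_Ici (0:ℝ)).norm_image_sub_le_of_norm_hasDerivWithin_le
      (fun x hx => (hd2 x hx).hasDerivWithinAt)
      (fun x hx => by simpa [Real.norm_eq_abs] using hM₂ x hx)
      (ht0 : t ∈ Ici (0:ℝ)) hs0
    have h2 : ‖s - t‖ ≤ δ := by
      rw [Real.norm_eq_abs, abs_of_nonneg (by linarith [hs.1] : (0:ℝ) ≤ s - t)]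
      linarith [hs.2]
    calc ‖h' s - h' t‖ ≤ M₂ * ‖s - t‖ := this
      _ ≤ M₂ * δ := mul_le_mul_of_nonneg_left h2 hM₂0
  -- Taylor-type bound
  have hkey : |h (t + δ) - h t - δ * h' t| ≤ M₂ * δ * δ := by
    set g : ℝ → ℝ := fun s => h s - h t - (s - t) * h' t with hgdef
    have hg : ∀ s ∈ Icc t (t + δ), HasDerivWithinAt g (h' s - h' t) (Icc t (t+δ)) s := by
      intro s hs
      have hs0 : s ∈ Ici (0:ℝ) := le_trans ht0 hs.1
      have h1 : HasDerivAt (fun s : ℝ => (s - t) * h' t) (1 * h' t) s :=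
        ((hasDerivAt_id s).sub_const t).mul_const (h' t)
      have := ((hd1 s hs0).sub_const (h t)).sub h1
      exact this.hasDerivWithinAt.congr_deriv (by ring)
    have h2 := (convex_Icc t (t+δ)).norm_image_sub_le_of_norm_hasDerivWithin_le
      hg (fun x hx => hmvt x hx)
      (⟨le_rfl, by linarith⟩ : t ∈ Icc t (t+δ))
      (⟨by linarith, le_rfl⟩ : t + δ ∈ Icc t (t+δ))
    have hgt : g t = 0 := by simp [hgdef]
    have hgtδ : g (t + δ) = h (t + δ) - h t - δ * h' t := by
      simp [hgdef]
    rw [hgt, sub_zero, hgtδ, Real.norm_eq_abs] at h2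
    have harg : t + δ - t = δ := by ring
    rw [harg, Real.norm_eq_abs, abs_of_nonneg hδ.le] at h2
    exact h2
  have hht : |h t| < ε * δ / 8 := by
    have := hN t htN
    rwa [Real.dist_eq, sub_zero] at this
  have hhtδ : |h (t + δ)| < ε * δ / 8 := by
    have := hN (t + δ) (by linarith)
    rwa [Real.dist_eq, sub_zero] at this
  rw [Real.dist_eq, sub_zero]
  have habs : δ * |h' t| = |δ * h' t| := by
    rw [abs_mul, abs_of_nonneg hδ.le]
  have h3 : |δ * h' t| ≤ |h (t+δ) - h t - δ * h' t| + |h (t+δ)| + |h t| := by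
    calc |δ * h' t| = |(h (t+δ) - h t) - (h (t+δ) - h t - δ * h' t)| := by
          rw [show (h (t+δ) - h t) - (h (t+δ) - h t - δ * h' t) = δ * h' t from by ring]
      _ ≤ |h (t+δ) - h t| + |h (t+δ) - h t - δ * h' t| := abs_sub _ _
      _ ≤ (|h (t+δ)| + |h t|) + |h (t+δ) - h t - δ * h' t| := by
          linarith [abs_sub (h (t+δ)) (h t)]
      _ = |h (t+δ) - h t - δ * h' t| + |h (t+δ)| + |h t| := by ring
  have hM₂δ2 : M₂ * δ * δ ≤ (ε/2) * δ := mul_le_mul_of_nonneg_right hM₂δ hδ.le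
  have h4 : δ * |h' t| < ε * δ := by
    rw [habs]
    calc |δ * h' t| ≤ |h (t+δ) - h t - δ * h' t| + |h (t+δ)| + |h t| := h3
      _ < M₂ * δ * δ + ε * δ / 8 + ε * δ / 8 := by linarith
      _ ≤ (ε/2) * δ + ε * δ / 4 := by linarith
      _ < ε * δ := by nlinarith
  have := lt_of_mul_lt_mul_left (by linarith [h4] : δ * |h' t| < δ * ε) hδ.le
  exact this
end Aux
open MeasureTheory Filter Set in
theorem Lq_bounded_two_derivs_tendsto_zero (h h' h'' : ℝ → ℝ) (q : ℝ) (hq : 1 ≤ q)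
    (hd1 : ∀ t ∈ Ici (0:ℝ), HasDerivAt h (h' t) t)
    (hd2 : ∀ t ∈ Ici (0:ℝ), HasDerivAt h' (h'' t) t)
    (hcont : ContinuousOn h'' (Ici (0:ℝ)))
    (hb1 : ∃ M : ℝ, ∀ t ∈ Ici (0:ℝ), |h' t| ≤ M)
    (hb2 : ∃ M : ℝ, ∀ t ∈ Ici (0:ℝ), |h'' t| ≤ M)
    (hLq : IntegrableOn (fun t => |h t| ^ q) (Ici (0:ℝ))) :
    IntegrableOn (fun t => |h' t| ^ (2 * q)) (Ici (0:ℝ)) ∧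
    Tendsto h atTop (nhds 0) ∧ Tendsto h' atTop (nhds 0) := by
  obtain ⟨M₁, hM₁⟩ := hb1
  obtain ⟨M₂, hM₂⟩ := hb2
  have hM₁0 : 0 ≤ M₁ := le_trans (abs_nonneg _) (hM₁ 0 (by simp))
  have hM₂0 : 0 ≤ M₂ := le_trans (abs_nonneg _) (hM₂ 0 (by simp))
  have hlip : ∀ s ∈ Ici (0:ℝ), ∀ t ∈ Ici (0:ℝ), |h s - h t| ≤ (max M₁ 1) * |s - t| := by
    intro s hs t ht
    have := (convex_Ici (0:ℝ)).norm_image_sub_le_of_norm_hasDerivWithin_le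
      (fun x hx => (hd1 x hx).hasDerivWithinAt)
      (fun x hx => by
        rw [Real.norm_eq_abs]; exact le_trans (hM₁ x hx) (le_max_left M₁ 1))
      ht hs
    simpa [Real.norm_eq_abs] using this
  have hh0 : Tendsto h atTop (nhds 0) :=
    tendsto_zero_of_Lq h q (max M₁ 1) hq (le_max_right _ _) hlip hLq
  have hh'0 : Tendsto h' atTop (nhds 0) :=
    deriv_tendsto_zero h h' h'' M₂ hd1 hd2 hM₂ hh0
  refine ⟨?_, hh0, hh'0⟩
  have hch : ContinuousOn h (Ici (0:ℝ)) :=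
    fun t ht => ((hd1 t ht).continuousAt).continuousWithinAt
  have hch' : ContinuousOn h' (Ici (0:ℝ)) :=
    fun t ht => ((hd2 t ht).continuousAt).continuousWithinAt
  have hq2 : (0:ℝ) ≤ 2*q - 2 := by linarith
  have hq0 : (0:ℝ) ≤ 2*q := by linarith
  -- global bound on |h|
  obtain ⟨T₀, hT₀⟩ := Metric.tendsto_atTop.mp hh0 1 one_pos
  obtain ⟨C₀, hC₀⟩ := (isCompact_Icc (a := (0:ℝ)) (b := max T₀ 0)).exists_bound_of_continuousOn
      (hch.mono (fun x hx => hx.1))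
  set K : ℝ := max C₀ 1 with hKdef
  have hK1 : (1:ℝ) ≤ K := le_max_right _ _
  have hK : ∀ t ∈ Ici (0:ℝ), |h t| ≤ K := by
    intro t ht
    rcases le_total t (max T₀ 0) with hc | hc
    · exact le_trans (by simpa [Real.norm_eq_abs] using hC₀ t ⟨ht, hc⟩) (le_max_left _ _)
    · have := hT₀ t (le_trans (le_max_left _ _) hc)
      rw [Real.dist_eq, sub_zero] at this
      linarith
  set D : ℝ := (2*q - 1) * M₂ with hDdef
  have hD0 : 0 ≤ D := mul_nonneg (by linarith) hM₂0
  set C : ℝ := 2^(q-1) * D^q with hCdef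
  have hC0 : 0 ≤ C := mul_nonneg (Real.rpow_nonneg (by norm_num) _) (Real.rpow_nonneg hD0 _)
  -- pointwise Young-type bound
  have hpt : ∀ t ∈ Ici (0:ℝ),
      |h t * ((2*q-1) * |h' t| ^ (2*q-2) * h'' t)|
        ≤ C * |h t|^q + (1/2) * |h' t|^(2*q) := by
    intro t ht
    have hψ : (0:ℝ) ≤ |h' t| ^ (2*q-2) := Real.rpow_nonneg (abs_nonneg _) _
    have e1 : |h t * ((2*q-1) * |h' t| ^ (2*q-2) * h'' t)|
        = |h t| * ((2*q-1) * |h' t| ^ (2*q-2) * |h'' t|) := by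
      rw [abs_mul, abs_mul, abs_mul, abs_of_nonneg (by linarith : (0:ℝ) ≤ 2*q-1),
        abs_of_nonneg hψ]
    have key : 0 ≤ (2*q-1) * (|h t| * |h' t|^(2*q-2)) * (M₂ - |h'' t|) :=
      mul_nonneg (mul_nonneg (by linarith) (mul_nonneg (abs_nonneg _) hψ))
        (by linarith [hM₂ t ht])
    have e2 : |h t| * ((2*q-1) * |h' t| ^ (2*q-2) * |h'' t|)
        ≤ D * (|h t| * |h' t| ^ (2*q-2)) := by
      rw [hDdef]
      nlinarith [key]
    rw [e1]
    exact le_trans e2 (young_free hq hD0 (abs_nonneg _) (abs_nonneg _))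
  -- FTC identity
  have hFTC : ∀ T, 0 ≤ T →
      (∫ t in (0:ℝ)..T, (|h' t|^(2*q) + h t * ((2*q-1) * |h' t|^(2*q-2) * h'' t)))
        = h T * (h' T * |h' T|^(2*q-2)) - h 0 * (h' 0 * |h' 0|^(2*q-2)) := by
    intro T hT
    have huIcc : uIcc (0:ℝ) T = Icc 0 T := uIcc_of_le hT
    have hmem : ∀ t ∈ uIcc (0:ℝ) T, t ∈ Ici (0:ℝ) := by
      rw [huIcc]; exact fun t ht => ht.1
    refine intervalIntegral.integral_eq_sub_of_hasDerivAt
      (f := fun s => h s * (h' s * |h' s|^(2*q-2))) (fun t ht => ?_) ?_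
    · have h1 : HasDerivAt (fun x : ℝ => x * |x|^(2*q-2))
          ((2*q-1) * |h' t|^(2*q-2)) (h' t) := phi_deriv hq (h' t)
      have h2 : HasDerivAt (fun s => h' s * |h' s|^(2*q-2))
          ((2*q-1) * |h' t|^(2*q-2) * h'' t) t := h1.comp t (hd2 t (hmem t ht))
      have h3 := (hd1 t (hmem t ht)).mul h2
      rw [← mul_phi hq (h' t)]
      exact h3
    · apply ContinuousOn.intervalIntegrable_of_Icc hT
      have hsub : Icc (0:ℝ) T ⊆ Ici (0:ℝ) := fun x hx => hx.1
      have c1 : ContinuousOn (fun t => |h' t|^(2*q)) (Icc 0 T) :=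
        (contAbsRpow hq0).comp_continuousOn (hch'.mono hsub)
      have c2 : ContinuousOn (fun t => |h' t|^(2*q-2)) (Icc 0 T) :=
        (contAbsRpow hq2).comp_continuousOn (hch'.mono hsub)
      exact c1.add ((hch.mono hsub).mul
        ((continuousOn_const.mul c2).mul (hcont.mono hsub)))
  set I0 : ℝ := ∫ t in Ici (0:ℝ), |h t|^q with hI0def
  have hI0nn : 0 ≤ I0 := setIntegral_nonneg measurableSet_Ici
    (fun x _ => Real.rpow_nonneg (abs_nonneg _) _)
  set B : ℝ := 2*(2*(K * M₁^(2*q-1)) + C*I0) with hBdef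
  have hXbound : ∀ T, 0 ≤ T → (∫ t in (0:ℝ)..T, |h' t|^(2*q)) ≤ B := by
    intro T hT
    have hsub : Icc (0:ℝ) T ⊆ Ici (0:ℝ) := fun x hx => hx.1
    have c1 : ContinuousOn (fun t => |h' t|^(2*q)) (Icc 0 T) :=
      (contAbsRpow hq0).comp_continuousOn (hch'.mono hsub)
    have c2 : ContinuousOn (fun t => h t * ((2*q-1) * |h' t|^(2*q-2) * h'' t)) (Icc 0 T) :=
      (hch.mono hsub).mul ((continuousOn_const.mul
        ((contAbsRpow hq2).comp_continuousOn (hch'.mono hsub))).mul (hcont.mono hsub))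
    have i1 : IntervalIntegrable (fun t => |h' t|^(2*q)) volume 0 T :=
      c1.intervalIntegrable_of_Icc hT
    have i2 : IntervalIntegrable (fun t => h t * ((2*q-1) * |h' t|^(2*q-2) * h'' t))
        volume 0 T := c2.intervalIntegrable_of_Icc hT
    have i3 : IntervalIntegrable (fun t => |h t|^q) volume 0 T := by
      rw [intervalIntegrable_iff]
      refine hLq.mono_set ?_
      rw [Set.uIoc_of_le hT]
      exact fun x hx => le_of_lt hx.1
    have hsplit := intervalIntegral.integral_add i1 i2
    have hXT : (∫ t in (0:ℝ)..T, |h' t|^(2*q))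
        = (h T * (h' T * |h' T|^(2*q-2)) - h 0 * (h' 0 * |h' 0|^(2*q-2)))
          - ∫ t in (0:ℝ)..T, h t * ((2*q-1) * |h' t|^(2*q-2) * h'' t) := by
      have := hFTC T hT
      rw [hsplit] at this
      linarith
    have hend : ∀ s ∈ Ici (0:ℝ), |h s * (h' s * |h' s|^(2*q-2))| ≤ K * M₁^(2*q-1) := by
      intro s hs
      rw [abs_mul]
      exact mul_le_mul (hK s hs) (phi_abs_le hq (hM₁ s hs)) (abs_nonneg _)
        (by linarith)
    have hI0T : (∫ t in (0:ℝ)..T, |h t|^q) ≤ I0 := by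
      rw [intervalIntegral.integral_of_le hT, hI0def]
      refine setIntegral_mono_set hLq
        (Filter.Eventually.of_forall fun s => Real.rpow_nonneg (abs_nonneg _) _)
        (Filter.Eventually.of_forall fun s hs => le_of_lt hs.1)
    have hgb : |∫ t in (0:ℝ)..T, h t * ((2*q-1) * |h' t|^(2*q-2) * h'' t)|
        ≤ C * I0 + (1/2) * ∫ t in (0:ℝ)..T, |h' t|^(2*q) := by
      have s1 := intervalIntegral.abs_integral_le_integral_abs (μ := volume) (f := fun t =>
        h t * ((2*q-1) * |h' t|^(2*q-2) * h'' t)) hT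
      have s2 : (∫ t in (0:ℝ)..T, |h t * ((2*q-1) * |h' t|^(2*q-2) * h'' t)|)
          ≤ ∫ t in (0:ℝ)..T, (C * |h t|^q + (1/2) * |h' t|^(2*q)) := by
        refine intervalIntegral.integral_mono_on hT i2.abs
          ((i3.const_mul C).add (i1.const_mul (1/2))) ?_
        exact fun x hx => hpt x hx.1
      have s3 : (∫ t in (0:ℝ)..T, (C * |h t|^q + (1/2) * |h' t|^(2*q)))
          = C * (∫ t in (0:ℝ)..T, |h t|^q) + (1/2) * ∫ t in (0:ℝ)..T, |h' t|^(2*q) := by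
        rw [intervalIntegral.integral_add (i3.const_mul C) (i1.const_mul (1/2)),
          intervalIntegral.integral_const_mul, intervalIntegral.integral_const_mul]
      have s4 : C * (∫ t in (0:ℝ)..T, |h t|^q) ≤ C * I0 :=
        mul_le_mul_of_nonneg_left hI0T hC0
      linarith
    have e1 := hend T hT
    have e2 := hend 0 (by simp)
    have habs : h T * (h' T * |h' T|^(2*q-2)) - h 0 * (h' 0 * |h' 0|^(2*q-2))
        - (∫ t in (0:ℝ)..T, h t * ((2*q-1) * |h' t|^(2*q-2) * h'' t))
        ≤ K * M₁^(2*q-1) + K * M₁^(2*q-1)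
          + (C * I0 + (1/2) * ∫ t in (0:ℝ)..T, |h' t|^(2*q)) := by
      have a1 := abs_le.mp e1
      have a2 := abs_le.mp e2
      have a3 := abs_le.mp hgb
      linarith
    rw [hBdef]
    rw [hXT]
    rw [hXT] at habs
    linarith
  -- conclude integrability
  have hInt : IntegrableOn (fun t => |h' t|^(2*q)) (Ioi (0:ℝ)) := by
    refine integrableOn_Ioi_of_intervalIntegral_norm_bounded (μ := volume)
      (l := atTop) (b := fun i : ℝ => i) B 0 (fun i => ?_) tendsto_id ?_
    · refine IntegrableOn.mono_set ?_ Ioc_subset_Icc_self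
      have hsub : Icc (0:ℝ) i ⊆ Ici (0:ℝ) := fun x hx => hx.1
      exact ((contAbsRpow hq0).comp_continuousOn (hch'.mono hsub)).integrableOn_Icc
    · filter_upwards [eventually_ge_atTop (0:ℝ)] with T hT
      have : (∫ t in (0:ℝ)..T, ‖|h' t|^(2*q)‖) = ∫ t in (0:ℝ)..T, |h' t|^(2*q) := by
        refine intervalIntegral.integral_congr fun x _ => ?_
        rw [Real.norm_eq_abs, abs_of_nonneg (Real.rpow_nonneg (abs_nonneg _) _)]
      rw [this]
      exact hXbound T hT
  exact (integrableOn_Ici_iff_integrableOn_Ioi (by simp)).2 hInt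
end

section
/- Let Y(t) = (Y₀, Y₁, Y₂, Y₃)(t) be a nonnegative C¹ solution on [0,∞) of the coinfection system Yₖ' = Fₖ(Y)Yₖ with F as in the model, with all parameters positive. Set f(t) = Σᵢ Yᵢ(t) and μ̂ = min{μ₀, μ₁, μ₂, μ₃}. Then f'(t) ≤ bK/4 - μ̂ f(t) for all t, and consequently f(t) ≤ max{f(0), bK/(4μ̂)} for all t ≥ 0. -/
open Set in
theorem total_population_bound
    (b K μ₀ μ₁ μ₂ μ₃ α₁ α₂ α₃ η₁ η₂ : ℝ)
    (hb : 0 < b) (hK : 0 < K) (hμ₀ : 0 < μ₀) (hμ₁ : 0 < μ₁) (hμ₂ : 0 < μ₂) (hμ₃ : 0 < μ₃)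
    (hα₁ : 0 < α₁) (hα₂ : 0 < α₂) (hα₃ : 0 < α₃) (hη₁ : 0 < η₁) (hη₂ : 0 < η₂)
    (Y₀ Y₁ Y₂ Y₃ : ℝ → ℝ)
    (hnn : ∀ t ∈ Ici (0:ℝ), 0 ≤ Y₀ t ∧ 0 ≤ Y₁ t ∧ 0 ≤ Y₂ t ∧ 0 ≤ Y₃ t)
    (hd0 : ∀ t ∈ Ici (0:ℝ), HasDerivAt Y₀
      ((b * (1 - Y₀ t / K) - α₁ * Y₁ t - α₂ * Y₂ t - α₃ * Y₃ t - μ₀) * Y₀ t) t)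
    (hd1 : ∀ t ∈ Ici (0:ℝ), HasDerivAt Y₁ ((α₁ * Y₀ t - η₁ * Y₃ t - μ₁) * Y₁ t) t)
    (hd2 : ∀ t ∈ Ici (0:ℝ), HasDerivAt Y₂ ((α₂ * Y₀ t - η₂ * Y₃ t - μ₂) * Y₂ t) t)
    (hd3 : ∀ t ∈ Ici (0:ℝ), HasDerivAt Y₃
      ((α₃ * Y₀ t + η₁ * Y₁ t + η₂ * Y₂ t - μ₃) * Y₃ t) t) :
    (∀ t ∈ Ici (0:ℝ),
      (b * (1 - Y₀ t / K) - α₁ * Y₁ t - α₂ * Y₂ t - α₃ * Y₃ t - μ₀) * Y₀ t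
      + (α₁ * Y₀ t - η₁ * Y₃ t - μ₁) * Y₁ t
      + (α₂ * Y₀ t - η₂ * Y₃ t - μ₂) * Y₂ t
      + (α₃ * Y₀ t + η₁ * Y₁ t + η₂ * Y₂ t - μ₃) * Y₃ t
      ≤ b * K / 4 - min (min μ₀ μ₁) (min μ₂ μ₃) * (Y₀ t + Y₁ t + Y₂ t + Y₃ t)) ∧
    (∀ t ∈ Ici (0:ℝ),
      Y₀ t + Y₁ t + Y₂ t + Y₃ t
      ≤ max (Y₀ 0 + Y₁ 0 + Y₂ 0 + Y₃ 0) (b * K / (4 * min (min μ₀ μ₁) (min μ₂ μ₃)))) := by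
  set μ := min (min μ₀ μ₁) (min μ₂ μ₃) with hμdef
  have hμpos : 0 < μ := lt_min (lt_min hμ₀ hμ₁) (lt_min hμ₂ hμ₃)
  have hμ0 : μ ≤ μ₀ := le_trans (min_le_left _ _) (min_le_left _ _)
  have hμ1 : μ ≤ μ₁ := le_trans (min_le_left _ _) (min_le_right _ _)
  have hμ2 : μ ≤ μ₂ := le_trans (min_le_right _ _) (min_le_left _ _)
  have hμ3 : μ ≤ μ₃ := le_trans (min_le_right _ _) (min_le_right _ _)
  have key : ∀ t ∈ Ici (0:ℝ),
      (b * (1 - Y₀ t / K) - α₁ * Y₁ t - α₂ * Y₂ t - α₃ * Y₃ t - μ₀) * Y₀ t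
      + (α₁ * Y₀ t - η₁ * Y₃ t - μ₁) * Y₁ t
      + (α₂ * Y₀ t - η₂ * Y₃ t - μ₂) * Y₂ t
      + (α₃ * Y₀ t + η₁ * Y₁ t + η₂ * Y₂ t - μ₃) * Y₃ t
      ≤ b * K / 4 - μ * (Y₀ t + Y₁ t + Y₂ t + Y₃ t) := by
    intro t ht
    obtain ⟨h0, h1, h2, h3⟩ := hnn t ht
    have hc : Y₀ t / K * K = Y₀ t := div_mul_cancel₀ _ hK.ne'
    have hpar : b * (1 - Y₀ t / K) * Y₀ t ≤ b * K / 4 := by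
      have heq : b * (1 - Y₀ t / K) * Y₀ t = b / K * ((K - Y₀ t) * Y₀ t) := by
        field_simp
      have hKK : b / K * K ^ 2 = b * K := by field_simp
      rw [heq]
      nlinarith [mul_nonneg (div_nonneg hb.le hK.le) (sq_nonneg (K - 2 * Y₀ t))]
    nlinarith [mul_nonneg (sub_nonneg.mpr hμ0) h0, mul_nonneg (sub_nonneg.mpr hμ1) h1,
      mul_nonneg (sub_nonneg.mpr hμ2) h2, mul_nonneg (sub_nonneg.mpr hμ3) h3]
  refine ⟨key, ?_⟩
  intro t ht
  set f : ℝ → ℝ := fun s => Y₀ s + Y₁ s + Y₂ s + Y₃ s with hfdef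
  set M : ℝ := b * K / (4 * μ) with hMdef
  have hCM : b * K / 4 - μ * M = 0 := by
    rw [hMdef]; field_simp; ring
  set g : ℝ → ℝ := fun s => (f s - M) * Real.exp (μ * s) with hgdef
  have hgd : ∀ s ∈ Ici (0:ℝ), HasDerivAt g
      ((((b * (1 - Y₀ s / K) - α₁ * Y₁ s - α₂ * Y₂ s - α₃ * Y₃ s - μ₀) * Y₀ s
      + (α₁ * Y₀ s - η₁ * Y₃ s - μ₁) * Y₁ s
      + (α₂ * Y₀ s - η₂ * Y₃ s - μ₂) * Y₂ s
      + (α₃ * Y₀ s + η₁ * Y₁ s + η₂ * Y₂ s - μ₃) * Y₃ s)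
      + (f s - M) * μ) * Real.exp (μ * s)) s := by
    intro s hs
    have hf : HasDerivAt (fun u => f u - M)
        ((b * (1 - Y₀ s / K) - α₁ * Y₁ s - α₂ * Y₂ s - α₃ * Y₃ s - μ₀) * Y₀ s
        + (α₁ * Y₀ s - η₁ * Y₃ s - μ₁) * Y₁ s
        + (α₂ * Y₀ s - η₂ * Y₃ s - μ₂) * Y₂ s
        + (α₃ * Y₀ s + η₁ * Y₁ s + η₂ * Y₂ s - μ₃) * Y₃ s) s :=
      ((((hd0 s hs).add (hd1 s hs)).add (hd2 s hs)).add (hd3 s hs)).sub_const M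
    have he : HasDerivAt (fun u => Real.exp (μ * u)) (Real.exp (μ * s) * μ) s := by
      simpa [Function.comp_def] using (Real.hasDerivAt_exp (μ * s)).comp s
        ((hasDerivAt_id s).const_mul μ)
    have := hf.mul he
    refine this.congr_deriv ?_
    ring
  have hgle : ∀ s ∈ Ici (0:ℝ), g s ≤ g 0 := by
    have hanti : AntitoneOn g (Ici (0:ℝ)) := by
      apply antitoneOn_of_deriv_nonpos (convex_Ici 0)
      · exact fun s hs => (hgd s hs).continuousAt.continuousWithinAt
      · intro s hs
        rw [interior_Ici] at hs
        exact (hgd s (mem_Ici.mpr (le_of_lt hs))).differentiableAt.differentiableWithinAt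
      · intro s hs
        rw [interior_Ici] at hs
        rw [(hgd s (mem_Ici.mpr (le_of_lt hs))).deriv]
        have hkey := key s (mem_Ici.mpr (le_of_lt hs))
        have hexp : (0:ℝ) < Real.exp (μ * s) := Real.exp_pos _
        have : (((b * (1 - Y₀ s / K) - α₁ * Y₁ s - α₂ * Y₂ s - α₃ * Y₃ s - μ₀) * Y₀ s
          + (α₁ * Y₀ s - η₁ * Y₃ s - μ₁) * Y₁ s
          + (α₂ * Y₀ s - η₂ * Y₃ s - μ₂) * Y₂ s
          + (α₃ * Y₀ s + η₁ * Y₁ s + η₂ * Y₂ s - μ₃) * Y₃ s)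
          + (f s - M) * μ) ≤ 0 := by
          simp only [hfdef]
          nlinarith [hCM]
        exact mul_nonpos_of_nonpos_of_nonneg this hexp.le
    exact fun s hs => hanti self_mem_Ici hs hs
  have hgt := hgle t ht
  have hg0 : g 0 = f 0 - M := by simp [hgdef]
  have hE1 : 1 ≤ Real.exp (μ * t) := Real.one_le_exp (mul_nonneg hμpos.le (mem_Ici.mp ht))
  have ht' : (0:ℝ) ≤ t := ht
  rcases le_total (f t) M with h | h
  · exact le_max_of_le_right h
  · have : f t ≤ f 0 := by
      have hgt' : (f t - M) * Real.exp (μ * t) ≤ f 0 - M := by rw [← hg0]; exact hgt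
      nlinarith [hgt', hE1, sub_nonneg.mpr h]
    exact le_max_of_le_left this
end

section
/- Let F(Y) = -q + AY be the vector field of the coinfection model with parameters positive and Y* ≥ 0 an equilibrium (Yᵢ*Fᵢ(Y*) = 0 for all i). Define the generalized Volterra function V(y) = Σᵢ (yᵢ - Yᵢ* ln yᵢ) for y ∈ (0,∞)⁴. Then along any solution y(t) of yₖ' = Fₖ(y)yₖ with positive coordinates, d/dt V(y(t)) = -(b/K)(y₀(t) - Y₀*)² + Σᵢ Fᵢ(Y*) yᵢ(t). -/
open Set in
theorem volterra_function_derivative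
    (b K μ₀ μ₁ μ₂ μ₃ α₁ α₂ α₃ η₁ η₂ : ℝ)
    (hb : 0 < b) (hK : 0 < K) (hμ₀ : 0 < μ₀) (hμ₁ : 0 < μ₁) (hμ₂ : 0 < μ₂) (hμ₃ : 0 < μ₃)
    (hα₁ : 0 < α₁) (hα₂ : 0 < α₂) (hα₃ : 0 < α₃) (hη₁ : 0 < η₁) (hη₂ : 0 < η₂)
    -- equilibrium point Y* ≥ 0
    (Y₀' Y₁' Y₂' Y₃' : ℝ)
    (hY0 : 0 ≤ Y₀') (hY1 : 0 ≤ Y₁') (hY2 : 0 ≤ Y₂') (hY3 : 0 ≤ Y₃')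
    (e0 : Y₀' * (b * (1 - Y₀' / K) - α₁ * Y₁' - α₂ * Y₂' - α₃ * Y₃' - μ₀) = 0)
    (e1 : Y₁' * (α₁ * Y₀' - η₁ * Y₃' - μ₁) = 0)
    (e2 : Y₂' * (α₂ * Y₀' - η₂ * Y₃' - μ₂) = 0)
    (e3 : Y₃' * (α₃ * Y₀' + η₁ * Y₁' + η₂ * Y₂' - μ₃) = 0)
    -- a positive solution of the system
    (y₀ y₁ y₂ y₃ : ℝ → ℝ) (t : ℝ)
    (hpos : 0 < y₀ t ∧ 0 < y₁ t ∧ 0 < y₂ t ∧ 0 < y₃ t)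
    (hd0 : HasDerivAt y₀
      ((b * (1 - y₀ t / K) - α₁ * y₁ t - α₂ * y₂ t - α₃ * y₃ t - μ₀) * y₀ t) t)
    (hd1 : HasDerivAt y₁ ((α₁ * y₀ t - η₁ * y₃ t - μ₁) * y₁ t) t)
    (hd2 : HasDerivAt y₂ ((α₂ * y₀ t - η₂ * y₃ t - μ₂) * y₂ t) t)
    (hd3 : HasDerivAt y₃ ((α₃ * y₀ t + η₁ * y₁ t + η₂ * y₂ t - μ₃) * y₃ t) t) :
    HasDerivAt (fun s =>
        (y₀ s - Y₀' * Real.log (y₀ s)) + (y₁ s - Y₁' * Real.log (y₁ s))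
        + (y₂ s - Y₂' * Real.log (y₂ s)) + (y₃ s - Y₃' * Real.log (y₃ s)))
      (-(b / K) * (y₀ t - Y₀') ^ 2
        + (b * (1 - Y₀' / K) - α₁ * Y₁' - α₂ * Y₂' - α₃ * Y₃' - μ₀) * y₀ t
        + (α₁ * Y₀' - η₁ * Y₃' - μ₁) * y₁ t
        + (α₂ * Y₀' - η₂ * Y₃' - μ₂) * y₂ t
        + (α₃ * Y₀' + η₁ * Y₁' + η₂ * Y₂' - μ₃) * y₃ t) t := by

  obtain ⟨h0, h1, h2, h3⟩ := hpos
  set F0 := (b * (1 - y₀ t / K) - α₁ * y₁ t - α₂ * y₂ t - α₃ * y₃ t - μ₀) with hF0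
  set F1 := (α₁ * y₀ t - η₁ * y₃ t - μ₁) with hF1
  set F2 := (α₂ * y₀ t - η₂ * y₃ t - μ₂) with hF2
  set F3 := (α₃ * y₀ t + η₁ * y₁ t + η₂ * y₂ t - μ₃) with hF3
  have D0 : HasDerivAt (fun s => y₀ s - Y₀' * Real.log (y₀ s))
      (F0 * y₀ t - Y₀' * (F0 * y₀ t / y₀ t)) t :=
    hd0.sub ((hd0.log h0.ne').const_mul Y₀')
  have D1 : HasDerivAt (fun s => y₁ s - Y₁' * Real.log (y₁ s))
      (F1 * y₁ t - Y₁' * (F1 * y₁ t / y₁ t)) t :=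
    hd1.sub ((hd1.log h1.ne').const_mul Y₁')
  have D2 : HasDerivAt (fun s => y₂ s - Y₂' * Real.log (y₂ s))
      (F2 * y₂ t - Y₂' * (F2 * y₂ t / y₂ t)) t :=
    hd2.sub ((hd2.log h2.ne').const_mul Y₂')
  have D3 : HasDerivAt (fun s => y₃ s - Y₃' * Real.log (y₃ s))
      (F3 * y₃ t - Y₃' * (F3 * y₃ t / y₃ t)) t :=
    hd3.sub ((hd3.log h3.ne').const_mul Y₃')
  have := ((D0.add D1).add D2).add D3
  convert this using 1
  · rfl
  · rfl
  · rfl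
  have s0 : F0 * y₀ t / y₀ t = F0 := by field_simp
  have s1 : F1 * y₁ t / y₁ t = F1 := by field_simp
  have s2 : F2 * y₂ t / y₂ t = F2 := by field_simp
  have s3 : F3 * y₃ t / y₃ t = F3 := by field_simp
  rw [s0, s1, s2, s3, hF0, hF1, hF2, hF3]
  linear_combination e0 + e1 + e2 + e3
end

section
/- For the coinfection model with all parameters positive, b > μ₀, and σ₁ < σ₂ < σ₃, the disease-free equilibrium E₂ = (S₂, 0, 0, 0) with S₂ = K(1 - μ₀/b) is F-stable if and only if S₂ ≤ σ₁. -/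
theorem E2_F_stable_iff
    (b K μ₀ μ₁ μ₂ μ₃ α₁ α₂ α₃ η₁ η₂ : ℝ)
    (hb : 0 < b) (hK : 0 < K) (hμ₀ : 0 < μ₀) (hμ₁ : 0 < μ₁) (hμ₂ : 0 < μ₂) (hμ₃ : 0 < μ₃)
    (hα₁ : 0 < α₁) (hα₂ : 0 < α₂) (hα₃ : 0 < α₃) (hη₁ : 0 < η₁) (hη₂ : 0 < η₂)
    (hbμ : μ₀ < b)
    (h12 : μ₁ / α₁ < μ₂ / α₂) (h23 : μ₂ / α₂ < μ₃ / α₃) :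
    ((0 ≤ K * (1 - μ₀ / b) ∧ 0 ≤ (0:ℝ) ∧ 0 ≤ (0:ℝ) ∧ 0 ≤ (0:ℝ)) ∧
     b * (1 - (K * (1 - μ₀ / b)) / K) - α₁ * 0 - α₂ * 0 - α₃ * 0 - μ₀ ≤ 0 ∧
     α₁ * (K * (1 - μ₀ / b)) - η₁ * 0 - μ₁ ≤ 0 ∧
     α₂ * (K * (1 - μ₀ / b)) - η₂ * 0 - μ₂ ≤ 0 ∧
     α₃ * (K * (1 - μ₀ / b)) + η₁ * 0 + η₂ * 0 - μ₃ ≤ 0)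
    ↔ K * (1 - μ₀ / b) ≤ μ₁ / α₁ := by
  set S := K * (1 - μ₀ / b) with hS
  constructor
  · rintro ⟨-, -, h1, -, -⟩
    have : α₁ * S ≤ μ₁ := by linarith
    rw [le_div_iff₀ hα₁]; linarith
  · intro h
    have hS1 : α₁ * S ≤ μ₁ := by
      have := (le_div_iff₀ hα₁).mp h; linarith
    have hS2 : α₂ * S ≤ μ₂ := by
      have := (le_div_iff₀ hα₂).mp (h.trans h12.le); linarith
    have hS3 : α₃ * S ≤ μ₃ := by
      have := (le_div_iff₀ hα₃).mp (h.trans (h12.le.trans h23.le)); linarith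
    have hSnn : 0 ≤ S := by
      have : μ₀ / b ≤ 1 := by
        rw [div_le_one hb]; linarith
      have : 0 ≤ 1 - μ₀ / b := by linarith
      positivity
    have hF0 : b * (1 - S / K) - α₁ * 0 - α₂ * 0 - α₃ * 0 - μ₀ ≤ 0 := by
      rw [hS]
      have : K * (1 - μ₀ / b) / K = 1 - μ₀ / b := by field_simp
      rw [this]
      have : b * (1 - (1 - μ₀ / b)) = μ₀ := by field_simp; ring
      linarith
    exact ⟨⟨hSnn, le_refl 0, le_refl 0, le_refl 0⟩, hF0, by linarith, by linarith, by linarith⟩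
end
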